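/- If φ is core-nilpotent of index m (i.e. Ker(φᵐ) = Ker(φ^{m+1}) and Im(φᵐ) = Im(φ^{m+1})), then the localization sequence 0 → Ker(φ̇) → V → V_x → 0 is naturally isomorphic to 0 → Ker(φᵐ) → V →^{φᵐ} Im(φᵐ) → 0, and it admits a unique k[x]-linear section given by σ = j ∘ ((φᵐ)|_{Im(φᵐ)})⁻¹, where j: Im(φᵐ) ↪ V is the inclusion and (φᵐ)|_{Im(φᵐ)}: Im(φᵐ) → Im(φ^{2m}) = Im(φᵐ) is an isomorphism. -/

import Mathlib

open Polynomial

theorem stmt_18 (k : Type*) [Field k] (V : Type*) [AddCommGroup V] [Module k V]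
    [Module (Polynomial k) V] [IsScalarTower k (Polynomial k) V]
    (φ : V →ₗ[k] V) (hφ : ∀ v : V, (X : Polynomial k) • v = φ v)
    (m : ℕ)
    (hker : LinearMap.ker (φ ^ m) = LinearMap.ker (φ ^ (m + 1)))
    (hrange : LinearMap.range (φ ^ m) = LinearMap.range (φ ^ (m + 1)))
    (hmin : ∀ l : ℕ, l < m → ¬(LinearMap.ker (φ ^ l) = LinearMap.ker (φ ^ (l + 1)) ∧
      LinearMap.range (φ ^ l) = LinearMap.range (φ ^ (l + 1))))
    (Wm : Submodule (Polynomial k) V)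
    (hWm : (Wm : Set V) = (LinearMap.range (φ ^ m) : Set V)) :
    -- the localization sequence is naturally isomorphic to
    -- 0 → Ker(φ^m) → V → Im(φ^m) → 0
    (LinearMap.ker (LocalizedModule.mkLinearMap
        (Submonoid.powers (X : Polynomial k)) V) : Set V)
      = (LinearMap.ker (φ ^ m) : Set V) ∧
    (∃ e : LocalizedModule (Submonoid.powers (X : Polynomial k)) V ≃ₗ[Polynomial k] Wm,
      ∀ v : V, (e (LocalizedModule.mkLinearMap
          (Submonoid.powers (X : Polynomial k)) V v) : V) = (φ ^ m) v) ∧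
    -- existence and uniqueness of the k[x]-linear section, given by
    -- σ = j ∘ ((φ^m)|_{Im(φ^m)})⁻¹
    (∃! σ : LocalizedModule (Submonoid.powers (X : Polynomial k)) V →ₗ[Polynomial k] V,
      (LocalizedModule.mkLinearMap (Submonoid.powers (X : Polynomial k)) V) ∘ₗ σ
        = LinearMap.id) ∧
    (∀ σ : LocalizedModule (Submonoid.powers (X : Polynomial k)) V →ₗ[Polynomial k] V,
      (LocalizedModule.mkLinearMap (Submonoid.powers (X : Polynomial k)) V) ∘ₗ σ
          = LinearMap.id →
      ∀ v : V,
        σ (LocalizedModule.mkLinearMap (Submonoid.powers (X : Polynomial k)) V v)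
            ∈ LinearMap.range (φ ^ m) ∧
        (φ ^ m) (σ (LocalizedModule.mkLinearMap
            (Submonoid.powers (X : Polynomial k)) V v)) = (φ ^ m) v) := by
  classical
  set S : Submonoid (Polynomial k) := Submonoid.powers (X : Polynomial k) with hS
  -- X^n acts as φ^n
  have hXn : ∀ (n : ℕ) (v : V), (X ^ n : Polynomial k) • v = (φ ^ n) v := by
    intro n
    induction n with
    | zero => intro v; simp
    | succ n ih =>
      intro v
      rw [pow_succ, mul_smul, hφ v, ih, pow_succ, Module.End.mul_apply]
  have happly : ∀ (a b : ℕ) (v : V), (φ ^ (a + b)) v = (φ ^ a) ((φ ^ b) v) := by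
    intro a b v; rw [pow_add, Module.End.mul_apply]
  -- kernel stabilization
  have hkerj : ∀ j : ℕ, LinearMap.ker (φ ^ (m + j)) = LinearMap.ker (φ ^ m) := by
    intro j
    induction j with
    | zero => rfl
    | succ j ih =>
      apply le_antisymm
      · intro v hv
        rw [LinearMap.mem_ker] at hv
        have h1 : (φ ^ j) v ∈ LinearMap.ker (φ ^ (m + 1)) := by
          rw [LinearMap.mem_ker, ← happly, show m + 1 + j = m + (j + 1) by omega]
          exact hv
        rw [← hker, LinearMap.mem_ker] at h1
        rw [← ih, LinearMap.mem_ker, happly]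
        exact h1
      · intro v hv
        rw [LinearMap.mem_ker] at hv ⊢
        rw [show m + (j + 1) = (j + 1) + m by omega, happly, hv, map_zero]
  -- range stabilization
  have hrangej : ∀ j : ℕ, LinearMap.range (φ ^ (m + j)) = LinearMap.range (φ ^ m) := by
    intro j
    induction j with
    | zero => rfl
    | succ j ih =>
      apply le_antisymm
      · rintro _ ⟨u, rfl⟩
        exact ⟨(φ ^ (j + 1)) u, (happly m (j + 1) u).symm⟩
      · intro w hw
        rw [hrange] at hw
        obtain ⟨u, hu⟩ := hw
        have h1 : (φ ^ m) u ∈ LinearMap.range (φ ^ (m + j)) := by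
          rw [ih]; exact ⟨u, rfl⟩
        obtain ⟨u', hu'⟩ := h1
        refine ⟨u', ?_⟩
        rw [show m + (j + 1) = 1 + (m + j) by omega, happly, hu', ← hu,
          show m + 1 = 1 + m by omega, happly]
  -- range ∩ kernel of φ^m is trivial
  have hinj : ∀ (n : ℕ) (w : V), w ∈ LinearMap.range (φ ^ m) → (φ ^ n) w = 0 → w = 0 := by
    rintro n _ ⟨u, rfl⟩ h
    have h1 : u ∈ LinearMap.ker (φ ^ (m + n)) := by
      rw [LinearMap.mem_ker, show m + n = n + m by omega, happly, h]
    rw [hkerj] at h1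
    exact h1
  have hdisj : ∀ w : V, w ∈ LinearMap.range (φ ^ m) → (φ ^ m) w = 0 → w = 0 :=
    fun w hw h => hinj m w hw h
  -- surjectivity of φ^n on the core
  have hsurj : ∀ (n : ℕ) (w : V), w ∈ LinearMap.range (φ ^ m) →
      ∃ w' ∈ LinearMap.range (φ ^ m), (φ ^ n) w' = w := by
    intro n w hw
    rw [← hrangej n] at hw
    obtain ⟨u, hu⟩ := hw
    refine ⟨(φ ^ m) u, ⟨u, rfl⟩, ?_⟩
    rw [← happly, show n + m = m + n by omega, hu]
  have hWm' : ∀ v : V, v ∈ Wm ↔ v ∈ LinearMap.range (φ ^ m) := by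
    intro v
    constructor
    · intro h
      have : v ∈ (Wm : Set V) := h
      rw [hWm] at this; exact this
    · intro h
      have : v ∈ (LinearMap.range (φ ^ m) : Set V) := h
      rw [← hWm] at this; exact this
  -- polynomial-linearity of powers of φ
  have hsmul : ∀ (p : Polynomial k) (v : V), φ (p • v) = p • φ v := by
    intro p
    induction p using Polynomial.induction_on' with
    | add p q hp hq => intro v; rw [add_smul, add_smul, map_add, hp, hq]
    | monomial n a =>
      intro v
      have hca : ∀ w : V, (C a : Polynomial k) • w = a • w := by
        intro w
        rw [← Polynomial.algebraMap_eq, algebraMap_smul]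
      have hcomm : ∀ w : V, φ ((φ ^ n) w) = (φ ^ n) (φ w) := by
        intro w
        rw [← Module.End.mul_apply, ← Module.End.mul_apply, ← pow_succ, ← pow_succ']
      rw [← C_mul_X_pow_eq_monomial, mul_smul, mul_smul, hca, hca, map_smul,
        hXn, hXn, hcomm]
  have hsmuln : ∀ (n : ℕ) (p : Polynomial k) (v : V), (φ ^ n) (p • v) = p • (φ ^ n) v := by
    intro n
    induction n with
    | zero => intro p v; simp
    | succ n ih =>
      intro p v
      rw [pow_succ, Module.End.mul_apply, Module.End.mul_apply, hsmul, ih]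
  -- φ^m as a k[x]-linear map into Wm
  let Φm : V →ₗ[Polynomial k] V :=
    { toFun := ⇑(φ ^ m)
      map_add' := fun x y => map_add _ x y
      map_smul' := fun p v => hsmuln m p v }
  let π : V →ₗ[Polynomial k] Wm :=
    Φm.codRestrict Wm (fun v => (hWm' _).mpr ⟨v, rfl⟩)
  have hπ : ∀ v : V, (π v : V) = (φ ^ m) v := fun v => rfl
  have hXmS : (X : Polynomial k) ^ m ∈ S := ⟨m, rfl⟩
  -- Wm is a localization of V at powers of X
  have hloc : IsLocalizedModule S π := by
    constructor
    · rintro ⟨_, n, rfl⟩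
      rw [Module.End.isUnit_iff]
      constructor
      · intro w w' h
        have h0 : ((X : Polynomial k) ^ n • w : Wm) = (X : Polynomial k) ^ n • w' := by
          simpa only [Module.algebraMap_end_apply] using h
        have h1 : (φ ^ n) (w : V) = (φ ^ n) (w' : V) := by
          rw [← hXn, ← hXn, ← Submodule.coe_smul, ← Submodule.coe_smul, h0]
        have h2 : (φ ^ n) ((w : V) - (w' : V)) = 0 := by
          rw [map_sub, h1, sub_self]
        have h3 : ((w : V) - (w' : V)) ∈ LinearMap.range (φ ^ m) :=
          (hWm' _).mp (sub_mem w.2 w'.2)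
        exact Subtype.ext (sub_eq_zero.mp (hinj n _ h3 h2))
      · intro w
        obtain ⟨w', hmem, hw'⟩ := hsurj n (w : V) ((hWm' _).mp w.2)
        refine ⟨⟨w', (hWm' _).mpr hmem⟩, Subtype.ext ?_⟩
        rw [Module.algebraMap_end_apply, Submodule.coe_smul, hXn]
        exact hw'
    · intro y
      refine ⟨⟨(y : V), ⟨(X : Polynomial k) ^ m, hXmS⟩⟩, ?_⟩
      apply Subtype.ext
      show ((X : Polynomial k) ^ m • y : Wm).1 = ((φ ^ m) (y : V))
      rw [Submodule.coe_smul, hXn]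
    · intro x y h
      refine ⟨⟨(X : Polynomial k) ^ m, hXmS⟩, ?_⟩
      have := congrArg Subtype.val h
      show (X : Polynomial k) ^ m • x = (X : Polynomial k) ^ m • y
      rw [hXn, hXn]
      exact this
  haveI := hloc
  let e : LocalizedModule S V ≃ₗ[Polynomial k] Wm := IsLocalizedModule.iso S π
  have hemk : ∀ v : V, e (LocalizedModule.mkLinearMap S V v) = π v := by
    intro v
    have h1 := LinearMap.congr_fun (IsLocalizedModule.iso_symm_comp S π) v
    simp only [LinearMap.comp_apply, LinearEquiv.coe_coe] at h1
    rw [← h1]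
    exact (IsLocalizedModule.iso S π).apply_symm_apply _
  -- kernel identification
  have hker1 : (LinearMap.ker (LocalizedModule.mkLinearMap S V) : Set V)
      = (LinearMap.ker (φ ^ m) : Set V) := by
    ext v
    simp only [SetLike.mem_coe, LinearMap.mem_ker]
    constructor
    · intro h
      obtain ⟨⟨_, n, rfl⟩, hs⟩ := (IsLocalizedModule.eq_zero_iff S
        (LocalizedModule.mkLinearMap S V)).mp h
      have h1 : (φ ^ n) v = 0 := by
        rw [← hXn]
        exact hs
      have h2 : v ∈ LinearMap.ker (φ ^ (m + n)) := by
        rw [LinearMap.mem_ker, happly, h1, map_zero]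
      rw [hkerj] at h2
      exact h2
    · intro h
      apply (IsLocalizedModule.eq_zero_iff S (LocalizedModule.mkLinearMap S V)).mpr
      refine ⟨⟨(X : Polynomial k) ^ m, hXmS⟩, ?_⟩
      show (X : Polynomial k) ^ m • v = 0
      rw [hXn, h]
  have hkermem : ∀ v : V, LocalizedModule.mkLinearMap S V v = 0 ↔ (φ ^ m) v = 0 := by
    intro v
    have := Set.ext_iff.mp hker1 v
    simpa only [SetLike.mem_coe, LinearMap.mem_ker] using this
  -- the restriction of φ^m to Wm is bijective
  let ρ : Wm →ₗ[Polynomial k] Wm := π.comp Wm.subtype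
  have hρ : Function.Bijective ρ := by
    constructor
    · intro w w' h
      have h1 : (φ ^ m) ((w : V) - (w' : V)) = 0 := by
        rw [map_sub]
        have := congrArg Subtype.val h
        simp only [ρ, LinearMap.comp_apply, Submodule.coe_subtype, hπ] at this
        rw [this, sub_self]
      have h2 : ((w : V) - (w' : V)) ∈ LinearMap.range (φ ^ m) :=
        (hWm' _).mp (sub_mem w.2 w'.2)
      exact Subtype.ext (sub_eq_zero.mp (hdisj _ h2 h1))
    · intro w
      obtain ⟨w', hmem, hw'⟩ := hsurj m (w : V) ((hWm' _).mp w.2)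
      exact ⟨⟨w', (hWm' _).mpr hmem⟩, Subtype.ext hw'⟩
  let ψ : Wm ≃ₗ[Polynomial k] Wm := LinearEquiv.ofBijective ρ hρ
  -- the section
  let σ₀ : LocalizedModule S V →ₗ[Polynomial k] V :=
    Wm.subtype ∘ₗ (ψ.symm : Wm →ₗ[Polynomial k] Wm) ∘ₗ (e : LocalizedModule S V →ₗ[Polynomial k] Wm)
  have hσ₀ : (LocalizedModule.mkLinearMap S V) ∘ₗ σ₀ = LinearMap.id := by
    apply LinearMap.ext
    intro z
    apply e.injective
    simp only [LinearMap.comp_apply, LinearMap.id_apply]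
    rw [hemk]
    show π (Wm.subtype (ψ.symm (e z))) = e z
    have : π (Wm.subtype (ψ.symm (e z))) = ρ (ψ.symm (e z)) := rfl
    rw [this]
    have : ρ (ψ.symm (e z)) = ψ (ψ.symm (e z)) := rfl
    rw [this, ψ.apply_symm_apply]
  -- every element of the localized module is divisible by X^m
  have hdiv : ∀ z : LocalizedModule S V, ∃ z', ((X : Polynomial k) ^ m) • z' = z := by
    intro z
    have hu := IsLocalizedModule.map_units (LocalizedModule.mkLinearMap S V)
      (⟨(X : Polynomial k) ^ m, hXmS⟩ : S)
    obtain ⟨z', hz'⟩ := (Module.End.isUnit_iff _).mp hu |>.2 z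
    refine ⟨z', ?_⟩
    rw [← hz', Module.algebraMap_end_apply]
  -- any section lands in the range of φ^m
  have hsecrange : ∀ σ : LocalizedModule S V →ₗ[Polynomial k] V,
      ∀ z : LocalizedModule S V, ∃ z', σ z = (φ ^ m) (σ z') := by
    intro σ z
    obtain ⟨z', hz'⟩ := hdiv z
    refine ⟨z', ?_⟩
    rw [← hz', map_smul, hXn]
  have hseceq : ∀ σ : LocalizedModule S V →ₗ[Polynomial k] V,
      (LocalizedModule.mkLinearMap S V) ∘ₗ σ = LinearMap.id →
      ∀ z : LocalizedModule S V, LocalizedModule.mkLinearMap S V (σ z) = z := by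
    intro σ h z
    exact LinearMap.congr_fun h z
  -- uniqueness of the section
  have huniq : ∀ σ : LocalizedModule S V →ₗ[Polynomial k] V,
      (LocalizedModule.mkLinearMap S V) ∘ₗ σ = LinearMap.id → σ = σ₀ := by
    intro σ h
    apply LinearMap.ext
    intro z
    obtain ⟨z₁, hz₁⟩ := hsecrange σ z
    obtain ⟨z₂, hz₂⟩ := hsecrange σ₀ z
    have hr : σ z - σ₀ z ∈ LinearMap.range (φ ^ m) := by
      rw [hz₁, hz₂, ← map_sub]
      exact ⟨_, rfl⟩
    have hk : (φ ^ m) (σ z - σ₀ z) = 0 := by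
      have h1 : LocalizedModule.mkLinearMap S V (σ z - σ₀ z) = 0 := by
        rw [map_sub, hseceq σ h z, hseceq σ₀ hσ₀ z, sub_self]
      exact (hkermem _).mp h1
    exact sub_eq_zero.mp (hdisj _ hr hk)
  refine ⟨hker1, ⟨e, fun v => ?_⟩, ⟨σ₀, hσ₀, huniq⟩, ?_⟩
  · rw [hemk v, hπ]
  · intro σ hσ v
    constructor
    · obtain ⟨z', hz'⟩ := hsecrange σ (LocalizedModule.mkLinearMap S V v)
      exact ⟨σ z', hz'.symm⟩
    · have h1 : LocalizedModule.mkLinearMap S V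
          (σ (LocalizedModule.mkLinearMap S V v) - v) = 0 := by
        rw [map_sub, hseceq σ hσ, sub_self]
      have h2 := (hkermem _).mp h1
      rw [map_sub] at h2
      exact sub_eq_zero.mp h2
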